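/- Let 1 ≤ p < ∞ and r > 0. Then for every nonnegative measurable function f on (0,∞), ( ∫₀^∞ ( ∫_x^∞ f(y) dy )^p x^{r-1} dx )^{1/p} ≤ (p/r) ( ∫₀^∞ (y f(y))^p y^{r-1} dy )^{1/p}. -/

import Mathlib

open MeasureTheory

/-- `∫_x^∞ y^(-t-1) dy = x^(-t)/t` in `ℝ≥0∞`. -/
lemma hardy_aux_Ioi {t : ℝ} (ht : 0 < t) {x : ℝ} (hx : 0 < x) :
    ∫⁻ y in Set.Ioi x, ENNReal.ofReal (y ^ (-t - 1)) = ENNReal.ofReal (x ^ (-t) / t) := by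
  have hlt : (-t - 1 : ℝ) < -1 := by linarith
  rw [← ofReal_integral_eq_lintegral_ofReal (integrableOn_Ioi_rpow_of_lt hlt hx)
      ((ae_restrict_mem measurableSet_Ioi).mono fun y hy =>
        Real.rpow_nonneg (le_of_lt (hx.trans hy)) _)]
  rw [integral_Ioi_rpow_of_lt hlt hx]
  congr 1
  have h1 : (-t - 1 + 1 : ℝ) = -t := by ring
  rw [h1, neg_div_neg_eq]

/-- `∫_0^b x^(ν-1) dx = b^ν/ν` in `ℝ≥0∞`. -/
lemma hardy_aux_Ioo {ν : ℝ} (hν : 0 < ν) {b : ℝ} (hb : 0 < b) :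
    ∫⁻ x in Set.Ioo (0:ℝ) b, ENNReal.ofReal (x ^ (ν - 1)) = ENNReal.ofReal (b ^ ν / ν) := by
  rw [Measure.restrict_congr_set Ioo_ae_eq_Ioc]
  have hint : IntegrableOn (fun x : ℝ => x ^ (ν - 1)) (Set.Ioc 0 b) volume := by
    have h := intervalIntegral.intervalIntegrable_rpow' (a := 0) (b := b) (r := ν - 1)
      (by linarith)
    rwa [intervalIntegrable_iff_integrableOn_Ioc_of_le hb.le] at h
  rw [← ofReal_integral_eq_lintegral_ofReal hint
      ((ae_restrict_mem measurableSet_Ioc).mono fun y hy => Real.rpow_nonneg hy.1.le _)]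
  rw [← intervalIntegral.integral_of_le hb.le, integral_rpow (Or.inl (by linarith))]
  congr 1
  have h1 : (ν - 1 + 1 : ℝ) = ν := by ring
  rw [h1, Real.zero_rpow hν.ne', sub_zero]

/-- Tonelli swap for the triangle `0 < x < y`. -/
lemma hardy_aux_swap (A W : ℝ → ENNReal) (hA : Measurable A) (hW : Measurable W) :
    ∫⁻ x in Set.Ioi (0:ℝ), A x * ∫⁻ y in Set.Ioi x, W y
      = ∫⁻ y in Set.Ioi (0:ℝ), W y * ∫⁻ x in Set.Ioo 0 y, A x := by
  have h1 : ∀ x : ℝ, A x * ∫⁻ y in Set.Ioi x, W y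
      = ∫⁻ y, Set.indicator (Set.Ioi x) (fun y => A x * W y) y := by
    intro x
    rw [lintegral_indicator measurableSet_Ioi _, lintegral_const_mul _ hW]
  have h2 : ∀ y : ℝ,
      (∫⁻ x in Set.Ioi (0:ℝ), Set.indicator (Set.Ioi x) (fun y' => A x * W y') y)
      = W y * ∫⁻ x in Set.Ioo 0 y, A x := by
    intro y
    have hind : ∀ x : ℝ, Set.indicator (Set.Ioi x) (fun y' => A x * W y') y
        = Set.indicator (Set.Iio y) (fun x => A x * W y) x := by
      intro x
      by_cases hxy : x < y
      · rw [Set.indicator_of_mem (by exact hxy : y ∈ Set.Ioi x),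
            Set.indicator_of_mem (by exact hxy : x ∈ Set.Iio y)]
      · rw [Set.indicator_of_notMem (by simpa using hxy),
            Set.indicator_of_notMem (by simpa using hxy)]
    simp_rw [hind]
    rw [lintegral_indicator measurableSet_Iio _, Measure.restrict_restrict measurableSet_Iio,
      Set.Iio_inter_Ioi, lintegral_mul_const _ hA, mul_comm]
  simp_rw [h1]
  rw [lintegral_lintegral_swap]
  · have h3 : ∀ y : ℝ,
        (∫⁻ x in Set.Ioi (0:ℝ), Set.indicator (Set.Ioi x) (fun y' => A x * W y') y)
        = Set.indicator (Set.Ioi (0:ℝ)) (fun y => W y * ∫⁻ x in Set.Ioo 0 y, A x) y := by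
      intro y
      rw [h2 y]
      by_cases hy : 0 < y
      · rw [Set.indicator_of_mem (by exact hy : y ∈ Set.Ioi (0:ℝ))]
      · rw [Set.indicator_of_notMem (by simpa using hy)]
        rw [Set.Ioo_eq_empty hy, Measure.restrict_empty, lintegral_zero_measure, mul_zero]
    simp_rw [h3]
    rw [lintegral_indicator measurableSet_Ioi _]
  · apply Measurable.aemeasurable
    have huncurry : (Function.uncurry fun x y => (Set.Ioi x).indicator (fun y' => A x * W y') y)
        = {z : ℝ × ℝ | z.1 < z.2}.indicator (fun z => A z.1 * W z.2) := by
      funext z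
      rcases lt_or_ge z.1 z.2 with h | h
      · rw [Function.uncurry_apply_pair, Set.indicator_of_mem (by exact h),
          Set.indicator_of_mem (by exact h)]
      · rw [Function.uncurry_apply_pair, Set.indicator_of_notMem (by simpa using h),
          Set.indicator_of_notMem (by simpa using h)]
    rw [huncurry]
    exact ((hA.comp measurable_fst).mul (hW.comp measurable_snd)).indicator
      (measurableSet_lt measurable_fst measurable_snd)

theorem stmt2 (p r : ℝ) (hp : 1 ≤ p) (hr : 0 < r) (f : ℝ → ℝ)
    (hf : Measurable f) (hf0 : ∀ x, 0 ≤ f x) :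
    (∫⁻ x in Set.Ioi (0:ℝ),
        (∫⁻ y in Set.Ioi x, ENNReal.ofReal (f y)) ^ p *
          ENNReal.ofReal (x ^ (r - 1))) ^ (1/p)
      ≤ ENNReal.ofReal (p / r) *
        (∫⁻ y in Set.Ioi (0:ℝ),
          ENNReal.ofReal (y * f y) ^ p * ENNReal.ofReal (y ^ (r - 1))) ^ (1/p) := by
  have hp0 : (0:ℝ) < p := lt_of_lt_of_le one_pos hp
  have hg : Measurable fun y : ℝ => ENNReal.ofReal (f y) := hf.ennreal_ofReal
  rcases eq_or_lt_of_le hp with hp1 | hp1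
  · -- case p = 1
    subst hp1
    simp only [one_div_one, ENNReal.rpow_one]
    have hA : Measurable fun x : ℝ => ENNReal.ofReal (x ^ (r - 1)) :=
      (measurable_id.pow measurable_const).ennreal_ofReal
    have step1 : ∫⁻ x in Set.Ioi (0:ℝ),
        (∫⁻ y in Set.Ioi x, ENNReal.ofReal (f y)) * ENNReal.ofReal (x ^ (r - 1))
        = ∫⁻ y in Set.Ioi (0:ℝ), ENNReal.ofReal (f y) *
            ∫⁻ x in Set.Ioo 0 y, ENNReal.ofReal (x ^ (r - 1)) := by
      rw [← hardy_aux_swap _ _ hA hg]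
      refine setLIntegral_congr_fun measurableSet_Ioi (fun x _ => ?_)
      rw [mul_comm]
    have step2 : ∫⁻ y in Set.Ioi (0:ℝ), ENNReal.ofReal (f y) *
            ∫⁻ x in Set.Ioo 0 y, ENNReal.ofReal (x ^ (r - 1))
        = ∫⁻ y in Set.Ioi (0:ℝ), ENNReal.ofReal (1 / r) *
            (ENNReal.ofReal (y * f y) * ENNReal.ofReal (y ^ (r - 1))) := by
      refine setLIntegral_congr_fun measurableSet_Ioi (fun y hy => ?_)
      have hy0 : (0:ℝ) < y := hy
      rw [hardy_aux_Ioo hr hy0]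
      rw [← ENNReal.ofReal_mul (hf0 y), ← ENNReal.ofReal_mul (mul_nonneg hy0.le (hf0 y)),
        ← ENNReal.ofReal_mul (by positivity : (0:ℝ) ≤ 1 / r)]
      congr 1
      have hyr : y ^ r = y * y ^ (r - 1) := by
        rw [show r = 1 + (r - 1) by ring, Real.rpow_add hy0, Real.rpow_one]
        ring_nf
      rw [hyr]
      field_simp
    rw [step1, step2, lintegral_const_mul' _ _ ENNReal.ofReal_ne_top]
  · -- case 1 < p
    have hpne : p ≠ 0 := hp0.ne'
    set q : ℝ := p.conjExponent with hq_def
    have hpq : p.HolderConjugate q := Real.HolderConjugate.conjExponent hp1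
    have hq0 : (0:ℝ) < q := hpq.symm.pos
    have hq_eq : q = p / (p - 1) := rfl
    have hp1' : p - 1 ≠ 0 := sub_ne_zero.mpr (ne_of_gt hp1)
    have hdiv : p / q = p - 1 := by
      rw [hq_eq]
      field_simp
    have hrp : 0 < r / p := div_pos hr hp0
    have hpr : 0 < p / r := div_pos hp0 hr
    set s : ℝ := (1 + r / p) / q with hs_def
    set σ : ℝ := (1 + r / p) * (p - 1) with hσ_def
    have hsq : s * q = 1 + r / p := div_mul_cancel₀ _ hq0.ne'
    have hsσ : s * p = σ := by
      rw [hs_def, hσ_def, div_mul_eq_mul_div, mul_div_assoc, hdiv]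
    set W : ℝ → ENNReal := fun y => ENNReal.ofReal (f y) ^ p * ENNReal.ofReal (y ^ σ)
      with hW_def
    set A : ℝ → ENNReal := fun x => ENNReal.ofReal (x ^ (r / p - 1)) with hA_def
    set J : ℝ → ENNReal := fun x => ∫⁻ y in Set.Ioi x, W y with hJ_def
    have hW : Measurable W :=
      (hg.pow measurable_const).mul ((measurable_id.pow measurable_const).ennreal_ofReal)
    have hA : Measurable A := (measurable_id.pow measurable_const).ennreal_ofReal
    have hJ : Measurable J :=
      Antitone.measurable fun a b hab => lintegral_mono_set (Set.Ioi_subset_Ioi hab)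
    -- pointwise Hölder step
    have key : ∀ x ∈ Set.Ioi (0:ℝ),
        (∫⁻ y in Set.Ioi x, ENNReal.ofReal (f y)) ^ p * ENNReal.ofReal (x ^ (r - 1))
          ≤ ENNReal.ofReal ((p / r) ^ (p / q)) * (A x * J x) := by
      intro x hx
      have hx0 : (0:ℝ) < x := hx
      have hcomb : ∀ a b : ℝ, ENNReal.ofReal (x ^ a) * ENNReal.ofReal (x ^ b)
          = ENNReal.ofReal (x ^ (a + b)) := fun a b => by
        rw [← ENNReal.ofReal_mul (Real.rpow_nonneg hx0.le _), ← Real.rpow_add hx0]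
      have hG : (∫⁻ y in Set.Ioi x, ENNReal.ofReal (f y))
          = ∫⁻ y in Set.Ioi x,
              ((fun y => ENNReal.ofReal (f y) * ENNReal.ofReal (y ^ s)) *
                fun y => ENNReal.ofReal (y ^ (-s))) y := by
        refine setLIntegral_congr_fun measurableSet_Ioi (fun y hy => ?_)
        have hy0 : (0:ℝ) < y := hx0.trans hy
        simp only [Pi.mul_apply]
        rw [mul_assoc, ← ENNReal.ofReal_mul (Real.rpow_nonneg hy0.le _),
          ← Real.rpow_add hy0, show s + -s = 0 by ring, Real.rpow_zero,
          ENNReal.ofReal_one, mul_one]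
      have E1 : (∫⁻ y in Set.Ioi x, (ENNReal.ofReal (f y) * ENNReal.ofReal (y ^ s)) ^ p)
          = J x := by
        refine setLIntegral_congr_fun measurableSet_Ioi (fun y hy => ?_)
        have hy0 : (0:ℝ) < y := hx0.trans hy
        rw [ENNReal.mul_rpow_of_nonneg _ _ hp0.le,
          ENNReal.ofReal_rpow_of_pos (Real.rpow_pos_of_pos hy0 s),
          ← Real.rpow_mul hy0.le, hsσ]
      have E2 : (∫⁻ y in Set.Ioi x, ENNReal.ofReal (y ^ (-s)) ^ q)
          = ENNReal.ofReal (x ^ (-(r / p)) * (p / r)) := by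
        have : (∫⁻ y in Set.Ioi x, ENNReal.ofReal (y ^ (-s)) ^ q)
            = ∫⁻ y in Set.Ioi x, ENNReal.ofReal (y ^ (-(r / p) - 1)) := by
          refine setLIntegral_congr_fun measurableSet_Ioi (fun y hy => ?_)
          have hy0 : (0:ℝ) < y := hx0.trans hy
          rw [ENNReal.ofReal_rpow_of_pos (Real.rpow_pos_of_pos hy0 _),
            ← Real.rpow_mul hy0.le, show -s * q = -(r / p) - 1 by rw [neg_mul, hsq]; ring]
        rw [this, hardy_aux_Ioi hrp hx0, div_eq_mul_inv, inv_div]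
      have hstep : (∫⁻ y in Set.Ioi x, ENNReal.ofReal (f y))
          ≤ (J x) ^ (1/p) * ENNReal.ofReal (x ^ (-(r / p)) * (p / r)) ^ (1/q) := by
        rw [hG, ← E1, ← E2]
        exact ENNReal.lintegral_mul_le_Lp_mul_Lq _ hpq
          ((hg.mul ((measurable_id.pow measurable_const).ennreal_ofReal)).aemeasurable)
          (((measurable_id.pow measurable_const).ennreal_ofReal).aemeasurable)
      have hpow : (∫⁻ y in Set.Ioi x, ENNReal.ofReal (f y)) ^ p
          ≤ J x * ENNReal.ofReal (x ^ (-(r / p)) * (p / r)) ^ (p / q) := by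
        calc (∫⁻ y in Set.Ioi x, ENNReal.ofReal (f y)) ^ p
            ≤ ((J x) ^ (1/p) * ENNReal.ofReal (x ^ (-(r / p)) * (p / r)) ^ (1/q)) ^ p :=
              ENNReal.rpow_le_rpow hstep hp0.le
          _ = J x * ENNReal.ofReal (x ^ (-(r / p)) * (p / r)) ^ (p / q) := by
              rw [ENNReal.mul_rpow_of_nonneg _ _ hp0.le, ← ENNReal.rpow_mul,
                ← ENNReal.rpow_mul, one_div_mul_cancel hpne, ENNReal.rpow_one,
                show 1/q * p = p / q by ring]
      have e1 : -(r / p) * (p / q) = r / p - r := by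
        rw [hdiv]
        field_simp
        ring
      have hD : ENNReal.ofReal (x ^ (-(r / p)) * (p / r)) ^ (p / q)
          = ENNReal.ofReal (x ^ (r / p - r)) * ENNReal.ofReal ((p / r) ^ (p / q)) := by
        rw [ENNReal.ofReal_rpow_of_pos (by positivity),
          Real.mul_rpow (by positivity) (by positivity),
          ← Real.rpow_mul hx0.le, e1, ENNReal.ofReal_mul (by positivity)]
      calc (∫⁻ y in Set.Ioi x, ENNReal.ofReal (f y)) ^ p * ENNReal.ofReal (x ^ (r - 1))
          ≤ (J x * ENNReal.ofReal (x ^ (-(r / p)) * (p / r)) ^ (p / q)) *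
              ENNReal.ofReal (x ^ (r - 1)) := mul_le_mul_left hpow _
        _ = ENNReal.ofReal ((p / r) ^ (p / q)) * (A x * J x) := by
            rw [hD, hA_def]
            simp only []
            rw [show (r / p - 1 : ℝ) = (r / p - r) + (r - 1) by ring, ← hcomb]
            ring
    -- integrate, swap, and conclude
    have main : (∫⁻ x in Set.Ioi (0:ℝ),
        (∫⁻ y in Set.Ioi x, ENNReal.ofReal (f y)) ^ p * ENNReal.ofReal (x ^ (r - 1)))
        ≤ ENNReal.ofReal ((p / r) ^ p) *
          ∫⁻ y in Set.Ioi (0:ℝ),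
            ENNReal.ofReal (y * f y) ^ p * ENNReal.ofReal (y ^ (r - 1)) := by
      have h1 : (∫⁻ x in Set.Ioi (0:ℝ),
          (∫⁻ y in Set.Ioi x, ENNReal.ofReal (f y)) ^ p * ENNReal.ofReal (x ^ (r - 1)))
          ≤ ∫⁻ x in Set.Ioi (0:ℝ), ENNReal.ofReal ((p / r) ^ (p / q)) * (A x * J x) :=
        setLIntegral_mono (measurable_const.mul (hA.mul hJ)) key
      have h2 : ∫⁻ x in Set.Ioi (0:ℝ), ENNReal.ofReal ((p / r) ^ (p / q)) * (A x * J x)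
          = ENNReal.ofReal ((p / r) ^ (p / q)) *
              ∫⁻ y in Set.Ioi (0:ℝ), W y * ∫⁻ x in Set.Ioo 0 y, A x := by
        rw [lintegral_const_mul' _ _ ENNReal.ofReal_ne_top, hardy_aux_swap A W hA hW]
      have h3 : ∫⁻ y in Set.Ioi (0:ℝ), W y * ∫⁻ x in Set.Ioo 0 y, A x
          = ∫⁻ y in Set.Ioi (0:ℝ), ENNReal.ofReal (p / r) *
              (ENNReal.ofReal (y * f y) ^ p * ENNReal.ofReal (y ^ (r - 1))) := by
        refine setLIntegral_congr_fun measurableSet_Ioi (fun y hy => ?_)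
        have hy0 : (0:ℝ) < y := hy
        have hcomby : ∀ a b : ℝ, ENNReal.ofReal (y ^ a) * ENNReal.ofReal (y ^ b)
            = ENNReal.ofReal (y ^ (a + b)) := fun a b => by
          rw [← ENNReal.ofReal_mul (Real.rpow_nonneg hy0.le _), ← Real.rpow_add hy0]
        have hAint : (∫⁻ x in Set.Ioo (0:ℝ) y, A x) = ENNReal.ofReal (y ^ (r / p) / (r / p)) :=
          hardy_aux_Ioo hrp hy0
        rw [hAint, ENNReal.ofReal_mul hy0.le, ENNReal.mul_rpow_of_nonneg _ _ hp0.le,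
          ENNReal.ofReal_rpow_of_pos hy0, hW_def]
        simp only []
        rw [div_eq_mul_inv, inv_div, ENNReal.ofReal_mul (Real.rpow_nonneg hy0.le _)]
        have hσ' : σ + r / p = p + (r - 1) := by
          rw [hσ_def]
          field_simp
          ring
        calc ENNReal.ofReal (f y) ^ p * ENNReal.ofReal (y ^ σ) *
              (ENNReal.ofReal (y ^ (r / p)) * ENNReal.ofReal (p / r))
            = (ENNReal.ofReal (y ^ σ) * ENNReal.ofReal (y ^ (r / p))) *
                (ENNReal.ofReal (f y) ^ p * ENNReal.ofReal (p / r)) := by ring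
          _ = ENNReal.ofReal (y ^ (σ + r / p)) *
                (ENNReal.ofReal (f y) ^ p * ENNReal.ofReal (p / r)) := by rw [hcomby]
          _ = ENNReal.ofReal (y ^ (p + (r - 1))) *
                (ENNReal.ofReal (f y) ^ p * ENNReal.ofReal (p / r)) := by rw [hσ']
          _ = (ENNReal.ofReal (y ^ p) * ENNReal.ofReal (y ^ (r - 1))) *
                (ENNReal.ofReal (f y) ^ p * ENNReal.ofReal (p / r)) := by rw [hcomby]
          _ = ENNReal.ofReal (p / r) *
                (ENNReal.ofReal (y ^ p) * ENNReal.ofReal (f y) ^ p *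
                  ENNReal.ofReal (y ^ (r - 1))) := by ring
      have hc : (p / r) ^ (p / q) * (p / r) = (p / r) ^ p := by
        nth_rewrite 2 [← Real.rpow_one (p / r)]
        rw [← Real.rpow_add hpr, hdiv]
        norm_num
      calc (∫⁻ x in Set.Ioi (0:ℝ),
          (∫⁻ y in Set.Ioi x, ENNReal.ofReal (f y)) ^ p * ENNReal.ofReal (x ^ (r - 1)))
          ≤ ENNReal.ofReal ((p / r) ^ (p / q)) *
              ∫⁻ y in Set.Ioi (0:ℝ), W y * ∫⁻ x in Set.Ioo 0 y, A x := h1.trans (le_of_eq h2)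
        _ = ENNReal.ofReal ((p / r) ^ (p / q)) * (ENNReal.ofReal (p / r) *
              ∫⁻ y in Set.Ioi (0:ℝ),
                ENNReal.ofReal (y * f y) ^ p * ENNReal.ofReal (y ^ (r - 1))) := by
            rw [h3, lintegral_const_mul' _ _ ENNReal.ofReal_ne_top]
        _ = ENNReal.ofReal ((p / r) ^ p) *
              ∫⁻ y in Set.Ioi (0:ℝ),
                ENNReal.ofReal (y * f y) ^ p * ENNReal.ofReal (y ^ (r - 1)) := by
            rw [← mul_assoc, ← ENNReal.ofReal_mul (by positivity), hc]
    calc (∫⁻ x in Set.Ioi (0:ℝ),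
          (∫⁻ y in Set.Ioi x, ENNReal.ofReal (f y)) ^ p * ENNReal.ofReal (x ^ (r - 1))) ^ (1/p)
        ≤ (ENNReal.ofReal ((p / r) ^ p) *
            ∫⁻ y in Set.Ioi (0:ℝ),
              ENNReal.ofReal (y * f y) ^ p * ENNReal.ofReal (y ^ (r - 1))) ^ (1/p) :=
          ENNReal.rpow_le_rpow main (by positivity)
      _ = ENNReal.ofReal (p / r) *
            (∫⁻ y in Set.Ioi (0:ℝ),
              ENNReal.ofReal (y * f y) ^ p * ENNReal.ofReal (y ^ (r - 1))) ^ (1/p) := by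
          rw [ENNReal.mul_rpow_of_nonneg _ _ (by positivity : (0:ℝ) ≤ 1/p),
            ENNReal.ofReal_rpow_of_pos (by positivity), ← Real.rpow_mul hpr.le,
            mul_one_div_cancel hpne, Real.rpow_one]
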